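/- Let R be a finitely generated Z^k-graded domain over a field of characteristic zero. If R admits a nonzero locally nilpotent derivation, then R admits a nonzero locally nilpotent derivation that is homogeneous with respect to the Z^k-grading. -/

import Mathlib

open DirectSum

section Aux
variable {K R : Type*} [Field K] [CommRing R] [Algebra K R]
variable {ι : Type*} [DecidableEq ι] [AddCommGroup ι]
variable (𝒜 : ι → Submodule K R) [GradedAlgebra 𝒜]

/-- The `K`-linear projection onto the degree-`u` homogeneous part. -/
noncomputable def projL (u : ι) : R →ₗ[K] R :=
  (𝒜 u).subtype ∘ₗ (DirectSum.component K ι (fun v => 𝒜 v) u) ∘ₗ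
    (DirectSum.decomposeLinearEquiv 𝒜).toLinearMap

theorem projL_apply (u : ι) (x : R) : projL 𝒜 u x = (DirectSum.decompose 𝒜 x u : R) := rfl

theorem projL_mem (u : ι) (x : R) : projL 𝒜 u x ∈ 𝒜 u := (DirectSum.decompose 𝒜 x u).2

theorem projL_of_mem_same {v : ι} {x : R} (hx : x ∈ 𝒜 v) : projL 𝒜 v x = x :=
  DirectSum.decompose_of_mem_same 𝒜 hx

theorem projL_of_mem_ne {v u : ι} {x : R} (hx : x ∈ 𝒜 v) (h : v ≠ u) : projL 𝒜 u x = 0 :=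
  DirectSum.decompose_of_mem_ne 𝒜 hx h

/-- The degree-`w` homogeneous component of a derivation, as a linear map. -/
noncomputable def Dw (δ : Derivation K R R) (w : ι) : R →ₗ[K] R :=
  (DirectSum.toModule K ι R (fun v => (projL 𝒜 (v + w)) ∘ₗ δ.toLinearMap ∘ₗ (𝒜 v).subtype)) ∘ₗ
    (DirectSum.decomposeLinearEquiv 𝒜).toLinearMap

theorem Dw_apply_of_mem (δ : Derivation K R R) (w : ι) {v : ι} {x : R} (hx : x ∈ 𝒜 v) :
    Dw 𝒜 δ w x = projL 𝒜 (v + w) (δ x) := by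
  have : DirectSum.decompose 𝒜 x = DirectSum.of _ v (⟨x, hx⟩ : 𝒜 v) :=
    DirectSum.decompose_of_mem 𝒜 hx
  simp only [Dw, LinearMap.comp_apply, LinearEquiv.coe_coe,
    DirectSum.decomposeLinearEquiv_apply, this]
  erw [DirectSum.toModule_lof]
  rfl

theorem Dw_mem (δ : Derivation K R R) (w : ι) {v : ι} {x : R} (hx : x ∈ 𝒜 v) :
    Dw 𝒜 δ w x ∈ 𝒜 (v + w) := by
  rw [Dw_apply_of_mem 𝒜 δ w hx]; exact projL_mem _ _ _

theorem Dw_leibniz_hom (δ : Derivation K R R) (w : ι) {a b : ι} {x y : R}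
    (hx : x ∈ 𝒜 a) (hy : y ∈ 𝒜 b) :
    Dw 𝒜 δ w (x * y) = x * Dw 𝒜 δ w y + y * Dw 𝒜 δ w x := by
  have hxy : x * y ∈ 𝒜 (a + b) := SetLike.mul_mem_graded hx hy
  rw [Dw_apply_of_mem 𝒜 δ w hxy, Dw_apply_of_mem 𝒜 δ w hx, Dw_apply_of_mem 𝒜 δ w hy]
  have hl : δ (x * y) = x * δ y + y * δ x := by
    rw [Derivation.leibniz]; simp [smul_eq_mul]
  rw [hl]
  simp only [projL_apply, map_add]
  have h1 : (DirectSum.decompose 𝒜 (x * δ y) (a + b + w) : R)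
      = x * DirectSum.decompose 𝒜 (δ y) (b + w) := by
    have := DirectSum.coe_decompose_mul_add_of_left_mem 𝒜 (b := δ y) (j := b + w) hx
    rwa [← add_assoc] at this
  have h2 : (DirectSum.decompose 𝒜 (y * δ x) (a + b + w) : R)
      = y * DirectSum.decompose 𝒜 (δ x) (a + w) := by
    have := DirectSum.coe_decompose_mul_add_of_left_mem 𝒜 (b := δ x) (j := a + w) hy
    have e : b + (a + w) = a + b + w := by abel
    rwa [e] at this
  rw [h1, h2]

theorem Dw_leibniz (δ : Derivation K R R) (w : ι) (x y : R) :
    Dw 𝒜 δ w (x * y) = x * Dw 𝒜 δ w y + y * Dw 𝒜 δ w x := by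
  induction x using DirectSum.Decomposition.inductionOn 𝒜 with
  | zero => simp
  | homogeneous a =>
    induction y using DirectSum.Decomposition.inductionOn 𝒜 with
    | zero => simp
    | homogeneous b => exact Dw_leibniz_hom 𝒜 δ w a.2 b.2
    | add y z hy hz =>
      rw [mul_add, map_add, hy, hz, map_add]; ring
  | add x z hx hz =>
    rw [add_mul, map_add, hx, hz, map_add]; ring

/-- The degree-`w` homogeneous component of a derivation. -/
noncomputable def deltaW (δ : Derivation K R R) (w : ι) : Derivation K R R :=
  Derivation.mk' (Dw 𝒜 δ w) (fun x y => by
    rw [Dw_leibniz 𝒜 δ w x y]; simp [smul_eq_mul])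

@[simp] theorem deltaW_apply (δ : Derivation K R R) (w : ι) (x : R) :
    deltaW 𝒜 δ w x = Dw 𝒜 δ w x := rfl

theorem exists_finset_Dw (δ : Derivation K R R) (g : R) :
    ∃ T : Finset ι, ∀ w, Dw 𝒜 δ w g ≠ 0 → w ∈ T := by
  classical
  refine ⟨(DirectSum.decompose 𝒜 g).support.biUnion
    (fun v => (DirectSum.decompose 𝒜 (δ (projL 𝒜 v g))).support.image (fun u => u - v)), ?_⟩
  intro w hw
  have hg : ∑ v ∈ (DirectSum.decompose 𝒜 g).support, projL 𝒜 v g = g := by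
    simpa only [projL_apply] using DirectSum.sum_support_decompose 𝒜 g
  have hsum : Dw 𝒜 δ w g
      = ∑ v ∈ (DirectSum.decompose 𝒜 g).support, projL 𝒜 (v + w) (δ (projL 𝒜 v g)) := by
    conv_lhs => rw [← hg]
    rw [map_sum]
    exact Finset.sum_congr rfl fun v _ => Dw_apply_of_mem 𝒜 δ w (projL_mem 𝒜 v g)
  rw [hsum] at hw
  obtain ⟨v, hv, hne⟩ := Finset.exists_ne_zero_of_sum_ne_zero hw
  refine Finset.mem_biUnion.2 ⟨v, hv, Finset.mem_image.2 ⟨v + w, ?_, by abel⟩⟩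
  rw [DFinsupp.mem_support_iff]
  intro h0
  apply hne
  rw [projL_apply, h0, Submodule.coe_zero]

/-- If a homogeneous component of `δ x` is nonzero, the corresponding homogeneous
component of the derivation is nonzero. -/
theorem deltaW_ne_zero_of_projL_ne (δ : Derivation K R R) {x : R} {v u : ι} (hx : x ∈ 𝒜 v)
    (h : projL 𝒜 u (δ x) ≠ 0) : deltaW 𝒜 δ (u - v) ≠ 0 := by
  intro h0
  apply h
  have : Dw 𝒜 δ (u - v) x = projL 𝒜 (v + (u - v)) (δ x) := Dw_apply_of_mem 𝒜 δ _ hx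
  rw [show v + (u - v) = u by abel] at this
  rw [← this, ← deltaW_apply, h0]
  rfl

/-- Main step of the induction: applying `δ` to an element whose components live in degrees
`≤ c` produces an element with components in degrees `≤ c + w₀`, and the top component is
computed by the top homogeneous component of `δ`. -/
theorem step_lemma [LinearOrder ι]
    (hmono : ∀ a b c d : ι, a ≤ b → c ≤ d → a + c ≤ b + d)
    (hstrict : ∀ a b c d : ι, a < b → c ≤ d → a + c < b + d)
    (δ : Derivation K R R) (w₀ : ι) (hmax : ∀ w, deltaW 𝒜 δ w ≠ 0 → w ≤ w₀)
    (c : ι) (z : R) (hbd : ∀ u, projL 𝒜 u z ≠ 0 → u ≤ c) :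
    (∀ u, projL 𝒜 u (δ z) ≠ 0 → u ≤ c + w₀) ∧
      projL 𝒜 (c + w₀) (δ z) = Dw 𝒜 δ w₀ (projL 𝒜 c z) := by
  classical
  have hz : ∑ t ∈ (DirectSum.decompose 𝒜 z).support, projL 𝒜 t z = z := by
    simpa only [projL_apply] using DirectSum.sum_support_decompose 𝒜 z
  have hδz : ∀ u : ι, projL 𝒜 u (δ z)
      = ∑ t ∈ (DirectSum.decompose 𝒜 z).support, projL 𝒜 u (δ (projL 𝒜 t z)) := by
    intro u
    conv_lhs => rw [← hz]
    rw [map_sum, map_sum]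
  have hbd' : ∀ t ∈ (DirectSum.decompose 𝒜 z).support, t ≤ c := by
    intro t ht
    apply hbd
    rw [DFinsupp.mem_support_iff] at ht
    rw [projL_apply]
    exact fun h => ht (Subtype.ext h)
  constructor
  · intro u hu
    rw [hδz] at hu
    obtain ⟨t, ht, hne⟩ := Finset.exists_ne_zero_of_sum_ne_zero hu
    have h1 : deltaW 𝒜 δ (u - t) ≠ 0 :=
      deltaW_ne_zero_of_projL_ne 𝒜 δ (projL_mem 𝒜 t z) hne
    have h2 : u - t ≤ w₀ := hmax _ h1
    have := hmono t c (u - t) w₀ (hbd' t ht) h2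
    rwa [show t + (u - t) = u by abel] at this
  · rw [hδz]
    rw [Finset.sum_eq_single c]
    · rw [Dw_apply_of_mem 𝒜 δ w₀ (projL_mem 𝒜 c z)]
    · intro t ht htc
      by_contra hne
      have h1 : deltaW 𝒜 δ (c + w₀ - t) ≠ 0 :=
        deltaW_ne_zero_of_projL_ne 𝒜 δ (projL_mem 𝒜 t z) hne
      have h2 : c + w₀ - t ≤ w₀ := hmax _ h1
      have h3 : t < c := lt_of_le_of_ne (hbd' t ht) htc
      have := hstrict t c (c + w₀ - t) w₀ h3 h2
      rw [show t + (c + w₀ - t) = c + w₀ by abel] at this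
      exact lt_irrefl _ this
    · intro hc
      have h0 : projL 𝒜 c z = 0 := by
        rw [DFinsupp.mem_support_iff, not_not] at hc
        rw [projL_apply, hc, Submodule.coe_zero]
      rw [h0, map_zero, map_zero]

theorem iter_lemma [LinearOrder ι]
    (hmono : ∀ a b c d : ι, a ≤ b → c ≤ d → a + c ≤ b + d)
    (hstrict : ∀ a b c d : ι, a < b → c ≤ d → a + c < b + d)
    (δ : Derivation K R R) (w₀ : ι) (hmax : ∀ w, deltaW 𝒜 δ w ≠ 0 → w ≤ w₀)
    (c : ι) (z : R) (hbd : ∀ u, projL 𝒜 u z ≠ 0 → u ≤ c) (N : ℕ) :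
    (∀ u, projL 𝒜 u ((δ.toLinearMap ^ N) z) ≠ 0 → u ≤ c + N • w₀) ∧
      projL 𝒜 (c + N • w₀) ((δ.toLinearMap ^ N) z) = ((Dw 𝒜 δ w₀) ^ N) (projL 𝒜 c z) := by
  induction N with
  | zero => simpa using hbd
  | succ N ih =>
    obtain ⟨ih1, ih2⟩ := ih
    have hstep := step_lemma 𝒜 hmono hstrict δ w₀ hmax (c + N • w₀)
      ((δ.toLinearMap ^ N) z) ih1
    have e1 : (δ.toLinearMap ^ (N + 1)) z = δ ((δ.toLinearMap ^ N) z) := by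
      rw [pow_succ']; rfl
    have e2 : c + N • w₀ + w₀ = c + (N + 1) • w₀ := by
      rw [succ_nsmul]; abel
    constructor
    · intro u hu
      rw [e1] at hu
      have := hstep.1 u hu
      rwa [e2] at this
    · rw [e1, ← e2, hstep.2, ih2, pow_succ', Module.End.mul_apply]

end Aux

theorem main_general {K R : Type*} [Field K] [CommRing R] [Algebra K R] [Algebra.FiniteType K R]
    {ι : Type*} [DecidableEq ι] [AddCommGroup ι] [LinearOrder ι]
    (hmono : ∀ a b c d : ι, a ≤ b → c ≤ d → a + c ≤ b + d)
    (hstrict : ∀ a b c d : ι, a < b → c ≤ d → a + c < b + d)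
    (𝒜 : ι → Submodule K R) [GradedAlgebra 𝒜]
    (δ : Derivation K R R) (hδ : δ ≠ 0)
    (hln : ∀ f : R, ∃ N : ℕ, (δ.toLinearMap ^ N) f = 0) :
    ∃ δ' : Derivation K R R, δ' ≠ 0 ∧
      (∀ f : R, ∃ N : ℕ, (δ'.toLinearMap ^ N) f = 0) ∧
      ∃ w : ι, ∀ v : ι, ∀ x ∈ 𝒜 v, δ' x ∈ 𝒜 (v + w) := by
  classical
  obtain ⟨s, hs⟩ := (inferInstance : Algebra.FiniteType K R).out
  choose Tg hTg using fun g : R => exists_finset_Dw 𝒜 δ g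
  set T : Finset ι := s.biUnion Tg with hT
  have hT0 : ∀ w ∉ T, deltaW 𝒜 δ w = 0 := by
    intro w hw
    refine Derivation.ext_of_adjoin_eq_top (s : Set R) hs ?_
    intro g hg
    have : Dw 𝒜 δ w g = 0 := by
      by_contra hne
      exact hw (Finset.mem_biUnion.2 ⟨g, hg, hTg g w hne⟩)
    simpa using this
  have hkey : ∀ (v : ι) (x : R), x ∈ 𝒜 v → ∑ w ∈ T, Dw 𝒜 δ w x = δ x := by
    intro v x hx
    have h1 : ∀ w ∈ T, Dw 𝒜 δ w x = projL 𝒜 (v + w) (δ x) :=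
      fun w _ => Dw_apply_of_mem 𝒜 δ w hx
    rw [Finset.sum_congr rfl h1]
    have hinj : ∀ a ∈ T, ∀ b ∈ T, (fun w => v + w) a = (fun w => v + w) b → a = b :=
      fun a _ b _ h => by exact add_left_cancel h
    rw [← Finset.sum_image (s := T) (g := fun w => v + w) (f := fun u => projL 𝒜 u (δ x)) hinj]
    have hsub : (DirectSum.decompose 𝒜 (δ x)).support ⊆ T.image (fun w => v + w) := by
      intro u hu
      rw [DFinsupp.mem_support_iff] at hu
      have hne : projL 𝒜 u (δ x) ≠ 0 := by
        rw [projL_apply]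
        exact fun h => hu (Subtype.ext h)
      have h2 : deltaW 𝒜 δ (u - v) ≠ 0 := deltaW_ne_zero_of_projL_ne 𝒜 δ hx hne
      have h3 : u - v ∈ T := by
        by_contra h4
        exact h2 (hT0 _ h4)
      exact Finset.mem_image.2 ⟨u - v, h3, by abel⟩
    rw [← Finset.sum_subset hsub (fun u _ hu => by
      rw [DFinsupp.mem_support_iff, not_not] at hu
      rw [projL_apply, hu, Submodule.coe_zero])]
    simpa only [projL_apply] using DirectSum.sum_support_decompose 𝒜 (δ x)
  have hsumδ : ∀ x : R, ∑ w ∈ T, Dw 𝒜 δ w x = δ x := by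
    intro x
    induction x using DirectSum.Decomposition.inductionOn 𝒜 with
    | zero => simp
    | add x y hx hy => simp only [map_add, Finset.sum_add_distrib, hx, hy]
    | homogeneous a => exact hkey _ _ a.2
  set Tne : Finset ι := T.filter (fun w => deltaW 𝒜 δ w ≠ 0) with hTne
  have hne : Tne.Nonempty := by
    rw [Finset.nonempty_iff_ne_empty]
    intro h
    apply hδ
    ext x
    rw [← hsumδ x]
    · refine Finset.sum_eq_zero fun w hw => ?_
      have : deltaW 𝒜 δ w = 0 := by
        by_contra hnz
        have : w ∈ Tne := Finset.mem_filter.2 ⟨hw, hnz⟩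
        rw [h] at this
        exact absurd this (Finset.notMem_empty w)
      simpa using congrArg (fun D : Derivation K R R => D x) this
  set w₀ : ι := Tne.max' hne with hw₀def
  have hw₀ : deltaW 𝒜 δ w₀ ≠ 0 := (Finset.mem_filter.1 (Tne.max'_mem hne)).2
  have hmax : ∀ w, deltaW 𝒜 δ w ≠ 0 → w ≤ w₀ := by
    intro w hw
    have h1 : w ∈ T := by
      by_contra h
      exact hw (hT0 w h)
    exact Tne.le_max' w (Finset.mem_filter.2 ⟨h1, hw⟩)
  refine ⟨deltaW 𝒜 δ w₀, hw₀, ?_, w₀, fun v x hx => Dw_mem 𝒜 δ w₀ hx⟩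
  -- local nilpotency
  intro f
  choose Nv hNv using fun v : ι => hln (projL 𝒜 v f)
  set S := (DirectSum.decompose 𝒜 f).support with hS
  refine ⟨S.sup Nv, ?_⟩
  have hf : ∑ v ∈ S, projL 𝒜 v f = f := by
    simpa only [projL_apply] using DirectSum.sum_support_decompose 𝒜 f
  have hD : (deltaW 𝒜 δ w₀).toLinearMap = Dw 𝒜 δ w₀ := rfl
  rw [hD, ← hf, map_sum]
  refine Finset.sum_eq_zero fun v hv => ?_
  have hbd : ∀ u, projL 𝒜 u (projL 𝒜 v f) ≠ 0 → u ≤ v := by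
    intro u hu
    rcases eq_or_ne v u with h | h
    · exact h.ge
    · exact absurd (projL_of_mem_ne 𝒜 (projL_mem 𝒜 v f) h) hu
  have hiter := (iter_lemma 𝒜 hmono hstrict δ w₀ hmax v (projL 𝒜 v f) hbd (S.sup Nv)).2
  have hzero : (δ.toLinearMap ^ S.sup Nv) (projL 𝒜 v f) = 0 := by
    have hle : Nv v ≤ S.sup Nv := Finset.le_sup hv
    have e : δ.toLinearMap ^ S.sup Nv
        = (δ.toLinearMap ^ (S.sup Nv - Nv v)) * (δ.toLinearMap ^ Nv v) := by
      rw [← pow_add, Nat.sub_add_cancel hle]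
    rw [e, Module.End.mul_apply, hNv, map_zero]
  rw [hzero, map_zero] at hiter
  rw [← projL_of_mem_same 𝒜 (projL_mem 𝒜 v f), ← hiter]

/-- A finitely generated `ℤᵏ`-graded domain over a field of characteristic zero that admits a
nonzero locally nilpotent derivation admits a nonzero homogeneous locally nilpotent
derivation. -/
theorem exists_homogeneous_lnd
    {K R : Type*} [Field K] [CharZero K] [CommRing R] [IsDomain R] [Algebra K R]
    [Algebra.FiniteType K R] (k : ℕ)
    (𝒜 : (Fin k → ℤ) → Submodule K R) [GradedAlgebra 𝒜]
    (δ : Derivation K R R) (hδ : δ ≠ 0)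
    (hln : ∀ f : R, ∃ N : ℕ, (δ.toLinearMap ^ N) f = 0) :
    ∃ δ' : Derivation K R R, δ' ≠ 0 ∧
      (∀ f : R, ∃ N : ℕ, (δ'.toLinearMap ^ N) f = 0) ∧
      ∃ w : Fin k → ℤ, ∀ v : Fin k → ℤ, ∀ x ∈ 𝒜 v, δ' x ∈ 𝒜 (v + w) := by
  letI lin : LinearOrder (Lex (Fin k → ℤ)) := Pi.Lex.linearOrder
  haveI ga : GradedAlgebra (fun v : Lex (Fin k → ℤ) => 𝒜 (ofLex v)) := ‹GradedAlgebra 𝒜›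
  obtain ⟨δ', h1, h2, w, hw⟩ := @main_general K R _ _ _ _ (Lex (Fin k → ℤ)) _ _ lin
    (fun a b c d hab hcd => by
      letI : PartialOrder (Lex (Fin k → ℤ)) := Pi.instPartialOrderLexForallOfLinearOrder
      exact add_le_add hab hcd)
    (fun a b c d hab hcd => by
      letI : PartialOrder (Lex (Fin k → ℤ)) := Pi.instPartialOrderLexForallOfLinearOrder
      exact add_lt_add_of_lt_of_le hab hcd)
    (fun v => 𝒜 (ofLex v)) ga δ hδ hln
  exact ⟨δ', h1, h2, ofLex w, fun v x hx => hw (toLex v) x hx⟩
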